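/- Let x₁, ..., x_k be pairwise distinct elements of a field F, let σ_i denote the i-th elementary symmetric polynomial in x₁,...,x_k and σ_j^r the j-th elementary symmetric polynomial in the variables with x_r omitted, and set c_{rj} = x_r^k σ_j^r / ∏_{s≠r}(x_r − x_s). Then for each j with 0 ≤ j ≤ k−1, the polynomial identity Σ_{i=j+1}^{k} σ_i X^{i−j−1} = Σ_{r=1}^{k} c_{rj} ∏_{s≠r} (1 + x_s X) holds in F[X]. -/

import Mathlib

open Polynomial

private lemma reflect_finset_sum {F : Type*} [Field F] {ι : Type*} (N : ℕ) (s : Finset ι)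
    (f : ι → F[X]) : reflect N (∑ i ∈ s, f i) = ∑ i ∈ s, reflect N (f i) := by
  classical
  induction s using Finset.induction with
  | empty => simp [Polynomial.reflect_zero]
  | insert _ _ h ih => simp [Finset.sum_insert h, Polynomial.reflect_add, ih]

private lemma reflect_one_X_add_C {F : Type*} [Field F] (a : F) :
    reflect 1 (X + C a) = 1 + C a * X := by
  have h : (X + C a : F[X]) = C 1 * X ^ 1 + C a * X ^ 0 := by simp
  rw [h, Polynomial.reflect_add, Polynomial.reflect_C_mul_X_pow,
    Polynomial.reflect_C_mul_X_pow]
  simp [Polynomial.revAt_le]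

private lemma reflect_prod_X_add_C {F : Type*} [Field F] {ι : Type*} [DecidableEq ι]
    (t : Finset ι) (f : ι → F) :
    reflect t.card (∏ i ∈ t, (X + C (f i))) = ∏ i ∈ t, (1 + C (f i) * X) := by
  induction t using Finset.induction with
  | empty => simp [Polynomial.reflect_one]
  | @insert a t ha ih =>
    rw [Finset.prod_insert ha, Finset.card_insert_of_notMem ha, Finset.prod_insert ha]
    have hdeg : (∏ i ∈ t, (X + C (f i))).natDegree ≤ t.card := by
      refine (Polynomial.natDegree_prod_le t _).trans (le_of_eq ?_)
      simp [Polynomial.natDegree_X_add_C]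
    have := Polynomial.reflect_mul (X + C (f a)) (∏ i ∈ t, (X + C (f i)))
      (by simp [Polynomial.natDegree_X_add_C] : (X + C (f a)).natDegree ≤ 1) hdeg
    rw [show t.card + 1 = 1 + t.card by omega, this, reflect_one_X_add_C, ih]

private lemma esymm_insert_rec {F : Type*} [Field F] {ι : Type*} [DecidableEq ι]
    {r : ι} {u : Finset ι} (h : r ∉ u) (f : ι → F) (n : ℕ) :
    ∑ t ∈ (insert r u).powersetCard (n + 1), ∏ s ∈ t, f s
      = (∑ t ∈ u.powersetCard (n + 1), ∏ s ∈ t, f s)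
        + f r * ∑ t ∈ u.powersetCard n, ∏ s ∈ t, f s := by
  rw [Finset.powersetCard_succ_insert h]
  have hdisj : Disjoint (u.powersetCard (n + 1)) ((u.powersetCard n).image (insert r)) := by
    rw [Finset.disjoint_left]
    intro t ht ht'
    obtain ⟨t', ht', rfl⟩ := Finset.mem_image.mp ht'
    have hsub : insert r t' ⊆ u := (Finset.mem_powersetCard.mp ht).1
    exact h (hsub (Finset.mem_insert_self r t'))
  rw [Finset.sum_union hdisj]
  congr 1
  rw [Finset.sum_image, Finset.mul_sum]
  · refine Finset.sum_congr rfl fun t ht => ?_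
    have htu : t ⊆ u := (Finset.mem_powersetCard.mp ht).1
    rw [Finset.prod_insert fun hrt => h (htu hrt)]
  · intro t1 h1 t2 h2 heq
    have h1u : t1 ⊆ u := (Finset.mem_powersetCard.mp h1).1
    have h2u : t2 ⊆ u := (Finset.mem_powersetCard.mp h2).1
    have hr1 : r ∉ t1 := fun hrt => h (h1u hrt)
    have hr2 : r ∉ t2 := fun hrt => h (h2u hrt)
    rw [← Finset.erase_insert hr1, ← Finset.erase_insert hr2, heq]

/-- Partial fraction decomposition identity: for pairwise distinct
`x₁,…,x_k` in a field, with `σ_i` the elementary symmetric polynomials,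
`σ_j^r` those omitting `x_r`, and `c_{rj} = x_r^k σ_j^r / ∏_{s≠r}(x_r − x_s)`,
one has `∑_{i=j+1}^k σ_i X^{i−j−1} = ∑_r c_{rj} ∏_{s≠r}(1 + x_s X)` in `F[X]`. -/
theorem partial_fraction_coeffs {F : Type*} [Field F] {k : ℕ} (x : Fin k → F)
    (hx : Function.Injective x) (j : ℕ) (hj : j < k)
    (c : Fin k → F)
    (hc : ∀ r, c r = x r ^ k *
        (∑ t ∈ (Finset.univ.erase r).powersetCard j, ∏ s ∈ t, x s) /
        ∏ s ∈ Finset.univ.erase r, (x r - x s)) :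
    ∑ i ∈ Finset.Icc (j + 1) k,
        C (∑ t ∈ (Finset.univ : Finset (Fin k)).powersetCard i, ∏ s ∈ t, x s) * X ^ (i - j - 1)
      = ∑ r : Fin k, C (c r) * ∏ s ∈ Finset.univ.erase r, (1 + C (x s) * X) := by
  classical
  set σ : ℕ → F := fun i => ∑ t ∈ (Finset.univ : Finset (Fin k)).powersetCard i, ∏ s ∈ t, x s
    with hσ
  set e : Fin k → ℕ → F :=
    fun r m => ∑ t ∈ (Finset.univ.erase r).powersetCard m, ∏ s ∈ t, x s with he
  have hcard_erase : ∀ r : Fin k, (Finset.univ.erase r).card = k - 1 := fun r => by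
    rw [Finset.card_erase_of_mem (Finset.mem_univ r)]; simp
  -- the recurrence σ (n+1) = e r (n+1) + x r * e r n
  have hrec : ∀ (r : Fin k) (n : ℕ), σ (n + 1) = e r (n + 1) + x r * e r n := by
    intro r n
    have huniv : (Finset.univ : Finset (Fin k)) = insert r (Finset.univ.erase r) :=
      (Finset.insert_erase (Finset.mem_univ r)).symm
    rw [hσ]
    simp only
    rw [huniv, esymm_insert_rec (Finset.notMem_erase r _) x n]
  -- e r k = 0
  have hetop : ∀ r : Fin k, e r k = 0 := by
    intro r
    rw [he]
    simp only
    rw [Finset.powersetCard_eq_empty.mpr (by rw [hcard_erase r]; omega), Finset.sum_empty]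
  -- the reversed polynomials
  set G : F[X] := ∑ i ∈ Finset.Icc (j + 1) k, C (σ i) * X ^ (k + j - i) with hG
  set P : Fin k → F[X] := fun r => ∏ s ∈ Finset.univ.erase r, (X + C (x s)) with hP
  -- Step A: reversed identity
  have key : G = ∑ r : Fin k, C (c r) * P r := by
    have hzero : G - (∑ r : Fin k, C (c r) * P r) = 0 := by
      apply Polynomial.eq_zero_of_natDegree_lt_card_of_eval_eq_zero _
        (f := fun r : Fin k => -x r) (fun a b hab => hx (neg_injective hab))
      · -- evaluation
        intro r
        rw [Polynomial.eval_sub, sub_eq_zero]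
        -- eval of RHS: only the r-th term survives
        have hevalR : Polynomial.eval (-x r) (∑ r' : Fin k, C (c r') * P r')
            = c r * ∏ s ∈ Finset.univ.erase r, (-x r + x s) := by
          rw [Polynomial.eval_finset_sum]
          rw [Finset.sum_eq_single r]
          · simp [hP, Polynomial.eval_prod]
          · intro r' _ hne
            have hrmem : r ∈ Finset.univ.erase r' := by
              simp [Finset.mem_erase, Ne.symm hne]
            rw [Polynomial.eval_mul, hP]
            simp only
            rw [Polynomial.eval_prod, Finset.prod_eq_zero hrmem (by simp), mul_zero]
          · simp
        rw [hevalR]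
        -- eval of G
        have hevalG : Polynomial.eval (-x r) G
            = ∑ i ∈ Finset.Icc (j + 1) k, σ i * (-x r) ^ (k + j - i) := by
          rw [hG, Polynomial.eval_finset_sum]
          refine Finset.sum_congr rfl fun i _ => by simp
        rw [hevalG]
        -- telescoping sum
        set a : ℕ → F := fun i => (-1 : F) ^ (k + j - i) * x r ^ (k + j - i) * e r i with ha
        have htel : ∑ i ∈ Finset.Icc (j + 1) k, σ i * (-x r) ^ (k + j - i)
            = a k - a j := by
          rw [← Finset.Ico_add_one_right_eq_Icc, Finset.sum_Ico_eq_sum_range]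
          have hkj : k + 1 - (j + 1) = k - j := by omega
          rw [hkj]
          have : ∀ i ∈ Finset.range (k - j),
              σ (j + 1 + i) * (-x r) ^ (k + j - (j + 1 + i))
                = a (j + (i + 1)) - a (j + i) := by
            intro i hi
            have hik : i < k - j := Finset.mem_range.mp hi
            have hE1 : k + j - (j + 1 + i) = k - 1 - i := by omega
            have hE2 : k + j - (j + i) = k - 1 - i + 1 := by omega
            have hji : j + (i + 1) = (j + i) + 1 := by omega
            rw [ha]
            simp only
            rw [hji, hE1, show k + j - ((j + i) + 1) = k - 1 - i by omega, hE2,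
              show j + 1 + i = (j + i) + 1 by omega, hrec r (j + i), neg_pow, pow_succ, pow_succ]
            ring
          rw [Finset.sum_congr rfl this, Finset.sum_range_sub (fun i => a (j + i)),
            show j + (k - j) = k by omega, show j + 0 = j by omega]
        rw [htel]
        have hak : a k = 0 := by
          rw [ha]; simp only; rw [hetop r, mul_zero]
        have haj : a j = (-1 : F) ^ k * x r ^ k * e r j := by
          rw [ha]; simp only; rw [show k + j - j = k by omega]
        -- the product side
        have hprod : ∏ s ∈ Finset.univ.erase r, (-x r + x s)
            = (-1 : F) ^ (k - 1) * ∏ s ∈ Finset.univ.erase r, (x r - x s) := by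
          rw [← hcard_erase r, ← Finset.prod_const, ← Finset.prod_mul_distrib]
          exact Finset.prod_congr rfl fun s _ => by ring
        have hdne : (∏ s ∈ Finset.univ.erase r, (x r - x s)) ≠ 0 := by
          rw [Finset.prod_ne_zero_iff]
          intro s hs
          have hsr : s ≠ r := (Finset.mem_erase.mp hs).1
          exact sub_ne_zero_of_ne fun hcon => hsr (hx hcon.symm)
        rw [hak, haj, hprod, hc r]
        have hk1 : (-1 : F) ^ k = (-1 : F) ^ (k - 1) * (-1) := by
          rw [← pow_succ, show k - 1 + 1 = k by omega]
        rw [hk1]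
        field_simp
        ring
      · -- degree bound
        rw [Fintype.card_fin]
        have h1 : G.natDegree ≤ k - 1 := by
          rw [hG]
          apply Polynomial.natDegree_sum_le_of_forall_le
          intro i hi
          have hik : j + 1 ≤ i ∧ i ≤ k := by
            constructor <;> [exact (Finset.mem_Icc.mp hi).1; exact (Finset.mem_Icc.mp hi).2]
          exact (Polynomial.natDegree_C_mul_X_pow_le _ _).trans (by omega)
        have h2 : (∑ r : Fin k, C (c r) * P r).natDegree ≤ k - 1 := by
          apply Polynomial.natDegree_sum_le_of_forall_le
          intro r _
          refine (Polynomial.natDegree_C_mul_le _ _).trans ?_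
          refine (Polynomial.natDegree_prod_le _ _).trans (le_of_eq ?_)
          have hone : ∀ s ∈ Finset.univ.erase r, (X + C (x s)).natDegree = 1 :=
            fun s _ => by simp [Polynomial.natDegree_X_add_C]
          rw [Finset.sum_congr rfl hone, Finset.sum_const, smul_eq_mul, mul_one, hcard_erase r]
        have := (Polynomial.natDegree_sub_le G (∑ r : Fin k, C (c r) * P r)).trans
          (max_le h1 h2)
        omega
    exact sub_eq_zero.mp hzero
  -- Step B: apply reflect (k-1)
  have hL : ∑ i ∈ Finset.Icc (j + 1) k, C (σ i) * X ^ (i - j - 1)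
      = reflect (k - 1) G := by
    rw [hG, reflect_finset_sum]
    refine Finset.sum_congr rfl fun i hi => ?_
    obtain ⟨hi1, hi2⟩ := Finset.mem_Icc.mp hi
    rw [Polynomial.reflect_C_mul_X_pow, Polynomial.revAt_le (by omega : k + j - i ≤ k - 1),
      show k - 1 - (k + j - i) = i - j - 1 by omega]
  have hR : ∑ r : Fin k, C (c r) * ∏ s ∈ Finset.univ.erase r, (1 + C (x s) * X)
      = reflect (k - 1) (∑ r : Fin k, C (c r) * P r) := by
    rw [reflect_finset_sum]
    refine Finset.sum_congr rfl fun r _ => ?_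
    rw [Polynomial.reflect_C_mul, hP]
    simp only
    rw [← hcard_erase r, reflect_prod_X_add_C]
  rw [hL, hR, key]
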